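/- Let A, Ã ∈ so(3) (real skew-symmetric 3×3 matrices). Then (1/8)‖A‖²‖Ã‖² ≤ ‖dev sym(A·Ã)‖² ≤ (1/6)‖A‖²‖Ã‖², where A·Ã is the matrix product. -/

import Mathlib

open Matrix MeasureTheory

noncomputable section

abbrev M3 := Matrix (Fin 3) (Fin 3) ℝ
abbrev V3 := Fin 3 → ℝ

def sym3 (X : M3) : M3 := (1/2 : ℝ) • (X + Xᵀ)
def dev3 (X : M3) : M3 := X - ((1/3 : ℝ) * Matrix.trace X) • (1 : M3)
def Anti3 (a : V3) : M3 := !![0, -a 2, a 1; a 2, 0, -a 0; -a 1, a 0, 0]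
def frobSq (X : M3) : ℝ := ∑ i, ∑ j, (X i j)^2
def frobNorm (X : M3) : ℝ := Real.sqrt (frobSq X)
def vnormSq (a : V3) : ℝ := ∑ i, (a i)^2

def pd (k : Fin 3) (f : V3 → ℝ) (x : V3) : ℝ := fderiv ℝ f x (Pi.single k 1)

def Curl3 (P : V3 → M3) (x : V3) : M3 :=
  Matrix.of fun i j =>
    ![pd 1 (fun y => P y i 2) x - pd 2 (fun y => P y i 1) x,
      pd 2 (fun y => P y i 0) x - pd 0 (fun y => P y i 2) x,
      pd 0 (fun y => P y i 1) x - pd 1 (fun y => P y i 0) x] j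

def Jac3 (u : V3 → V3) (x : V3) : M3 :=
  Matrix.of fun i j => pd j (fun y => u y i) x

def lpM (q : ℝ) (Q : V3 → M3) : ℝ := (∫ x : V3, frobNorm (Q x) ^ q) ^ (1/q)
def lpV (q : ℝ) (a : V3 → V3) : ℝ := (∫ x : V3, Real.sqrt (vnormSq (a x)) ^ q) ^ (1/q)

lemma skew_eq_anti (A : M3) (hA : Aᵀ = -A) : A = Anti3 ![A 2 1, A 0 2, A 1 0] := by
  have h := fun i j => congrFun (congrFun hA j) i
  simp only [Matrix.transpose_apply, Matrix.neg_apply] at h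
  ext i j
  fin_cases i <;> fin_cases j <;>
    simp [Anti3] <;>
    first
      | linarith [h 0 0] | linarith [h 1 1] | linarith [h 2 2]
      | linarith [h 0 1] | linarith [h 0 2] | linarith [h 1 2]

/-- For skew-symmetric A, Ã ∈ so(3),
(1/8)‖A‖²‖Ã‖² ≤ ‖dev sym(A·Ã)‖² ≤ (1/6)‖A‖²‖Ã‖² (Frobenius norms). -/
theorem stmt1 (A Atil : M3) (hA : Aᵀ = -A) (hAtil : Atilᵀ = -Atil) :
    (1/8) * frobSq A * frobSq Atil ≤ frobSq (dev3 (sym3 (A * Atil))) ∧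
    frobSq (dev3 (sym3 (A * Atil))) ≤ (1/6) * frobSq A * frobSq Atil := by
  rw [skew_eq_anti A hA, skew_eq_anti Atil hAtil]
  set a0 := A 2 1; set a1 := A 0 2; set a2 := A 1 0
  set b0 := Atil 2 1; set b1 := Atil 0 2; set b2 := Atil 1 0
  simp only [frobSq, dev3, sym3, Matrix.trace, Matrix.diag, Matrix.mul_apply,
    Fin.sum_univ_succ, Fin.sum_univ_zero, Matrix.sub_apply, Matrix.smul_apply,
    Matrix.add_apply, Matrix.transpose_apply, Matrix.one_apply, Anti3,
    Matrix.cons_val', Matrix.cons_val_zero, Matrix.cons_val_one, Matrix.head_cons,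
    Matrix.empty_val', Matrix.cons_val_fin_one, Matrix.head_fin_const,
    Matrix.cons_val_succ, smul_eq_mul, Matrix.cons_val]
  norm_num [Fin.ext_iff, Matrix.cons_val, Matrix.cons_val_two, Matrix.vecHead, Matrix.vecTail]
  ring_nf
  constructor
  · nlinarith [sq_nonneg (a0*b0 + a1*b1 + a2*b2), sq_nonneg a0, sq_nonneg b0]
  · nlinarith [sq_nonneg (a0*b1 - a1*b0), sq_nonneg (a0*b2 - a2*b0), sq_nonneg (a1*b2 - a2*b1)]
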